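/- Suppose payments are not used (p ≡ 0) and a non-constant allocation rule x(α,β) = x̂(η(α,β)) is equitable and implementable, with x̂ continuous. Then there exists a merit level η* in the interior range of η and a constant k such that β/z(α) = k for all types (α,β) ∈ Θ with η(α,β) = η*. -/
import Mathlib


open Set

/-- With ordeals only (`p ≡ 0`), a non-constant, equitable and implementable
allocation rule `x = x̂ ∘ η` with `x̂` continuous forces the existence of a merit level `η*`
attained on `Θ` and a constant `k` with `β / z(α) = k` on the whole iso-merit set of `η*`. -/
theorem stmt3
    (Θ : Set (ℝ × ℝ)) (hΘopen : IsOpen Θ) (hΘconv : Convex ℝ Θ)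
    (hΘbdd : Bornology.IsBounded Θ) (hΘpos : ∀ θ ∈ Θ, 0 < θ.2)
    (z : ℝ → ℝ) (hzC2 : ContDiff ℝ 2 z)
    (hzpos : ∀ a, 0 < z a) (hz' : ∀ a, deriv z a < 0)
    (η : ℝ × ℝ → ℝ) (hηC2 : ContDiff ℝ 2 η)
    (c : ℝ) (hc : 0 < c)
    (hηα : ∀ a b : ℝ, c ≤ deriv (fun a' => η (a', b)) a)
    (hηβ : ∀ a b : ℝ, c ≤ deriv (fun b' => η (a, b')) b)
    (x : ℝ × ℝ → ℝ) (xhat : ℝ → ℝ)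
    (hxform : ∀ θ ∈ Θ, x θ = xhat (η θ))
    (hxhatcont : Continuous xhat)
    (hxrange : ∀ θ ∈ Θ, x θ ∈ Icc (0:ℝ) 1)
    -- equity: equal merit implies equal allocation
    (hEq : ∀ θ1 ∈ Θ, ∀ θ2 ∈ Θ, η θ1 = η θ2 → x θ1 = x θ2)
    -- non-constant
    (hnc : ∃ θ1 ∈ Θ, ∃ θ2 ∈ Θ, x θ1 ≠ x θ2)
    -- implementability with ordeals only (p ≡ 0)
    (hImpl : ∃ q : ℝ × ℝ → ℝ, (∀ θ ∈ Θ, 0 ≤ q θ) ∧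
      (∀ θ ∈ Θ, ∀ θ' ∈ Θ,
        θ.2 * x θ - z θ.1 * q θ ≥ θ.2 * x θ' - z θ.1 * q θ') ∧
      (∀ θ ∈ Θ, 0 ≤ θ.2 * x θ - z θ.1 * q θ)) :
    ∃ ηstar : ℝ, (∃ θ0 ∈ Θ, η θ0 = ηstar) ∧
      ∃ k : ℝ, ∀ θ ∈ Θ, η θ = ηstar → θ.2 / z θ.1 = k := by
  obtain ⟨q, hq0, hIC, hIR⟩ := hImpl
  set m : ℝ × ℝ → ℝ := fun θ => θ.2 / z θ.1 with hmdef
  -- Monotonicity of the allocation in the merit ratio m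
  have mono : ∀ θ ∈ Θ, ∀ θ' ∈ Θ, m θ < m θ' → x θ ≤ x θ' := by
    intro θ hθ θ' hθ' hlt
    have h1 := hIC θ' hθ' θ hθ
    have h2 := hIC θ hθ θ' hθ'
    have hz1 := hzpos θ.1
    have hz2 := hzpos θ'.1
    have hlt' : θ.2 * z θ'.1 < θ'.2 * z θ.1 := by
      have : θ.2 / z θ.1 < θ'.2 / z θ'.1 := hlt
      rwa [div_lt_div_iff₀ hz1 hz2] at this
    by_contra hx
    push_neg at hx
    have hA := mul_le_mul_of_nonneg_left h2.le hz2.le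
    have hB := mul_le_mul_of_nonneg_left h1.le hz1.le
    nlinarith [mul_pos (sub_pos.2 hlt') (sub_pos.2 hx)]
  by_cases hcase : ∃ θ0 ∈ Θ, ∀ θ ∈ Θ, η θ = η θ0 → m θ = m θ0
  · obtain ⟨θ0, hθ0, hconst⟩ := hcase
    exact ⟨η θ0, ⟨θ0, hθ0, rfl⟩, m θ0, hconst⟩
  push_neg at hcase
  exfalso
  -- Key: if a merit level carries two points with distinct m, then x is constant
  -- on a band of merit levels around it.
  have side : ∀ θlo ∈ Θ, ∀ θhi ∈ Θ, η θlo = η θhi → m θlo < m θhi →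
      ∃ δ > 0, ∀ θ ∈ Θ, |η θ - η θhi| < δ → x θ = x θhi := by
    rintro ⟨a, b⟩ hlo ⟨a', b'⟩ hhi hηeq hmlt
    obtain ⟨ε1, hε1, hball1⟩ := Metric.isOpen_iff.mp hΘopen (a, b) hlo
    obtain ⟨ε2, hε2, hball2⟩ := Metric.isOpen_iff.mp hΘopen (a', b') hhi
    have hza := hzpos a
    have hza' := hzpos a'
    have hmlt' : b / z a < b' / z a' := hmlt
    have hxlohi : x (a, b) = x (a', b') := hEq _ hlo _ hhi hηeq
    -- vertical sections of η
    set g : ℝ → ℝ := fun t => η (a, t) with hgdef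
    set g' : ℝ → ℝ := fun t => η (a', t) with hg'def
    have hgmono : StrictMono g :=
      strictMono_of_deriv_pos fun t => lt_of_lt_of_le hc (hηβ a t)
    have hg'mono : StrictMono g' :=
      strictMono_of_deriv_pos fun t => lt_of_lt_of_le hc (hηβ a' t)
    have hgcont : Continuous g := hηC2.continuous.comp (by fun_prop)
    have hg'cont : Continuous g' := hηC2.continuous.comp (by fun_prop)
    have hmem1 : ∀ t : ℝ, |t - b| < ε1 → (a, t) ∈ Θ := by
      intro t ht
      apply hball1
      rw [Metric.mem_ball, Prod.dist_eq]
      simp only [dist_self, Real.dist_eq]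
      exact max_lt hε1 ht
    have hmem2 : ∀ t : ℝ, |t - b'| < ε2 → (a', t) ∈ Θ := by
      intro t ht
      apply hball2
      rw [Metric.mem_ball, Prod.dist_eq]
      simp only [dist_self, Real.dist_eq]
      exact max_lt hε2 ht
    -- right band parameters
    have hbK : b < (b' / z a') * z a := (div_lt_iff₀ hza).mp hmlt'
    set εR : ℝ := min (ε1 / 2) (((b' / z a') * z a - b) / 2) with hεRdef
    have hεR : 0 < εR := lt_min (by linarith) (by linarith)
    -- left band parameters
    have hbL : (b / z a) * z a' < b' := (lt_div_iff₀ hza').mp hmlt'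
    set εL : ℝ := min (ε2 / 2) ((b' - (b / z a) * z a') / 2) with hεLdef
    have hεL : 0 < εL := lt_min (by linarith) (by linarith)
    set δR : ℝ := g (b + εR) - g b with hδRdef
    have hδR : 0 < δR := sub_pos.2 (hgmono (by linarith))
    set δL : ℝ := g' b' - g' (b' - εL) with hδLdef
    have hδL : 0 < δL := sub_pos.2 (hg'mono (by linarith))
    refine ⟨min δR δL, lt_min hδR hδL, ?_⟩
    intro θ hθ hclose
    have habs := abs_lt.mp hclose
    have hgb : g b = η (a', b') := hηeq
    have hg'b : g' b' = η (a', b') := rfl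
    rcases lt_trichotomy (η θ) (η (a', b')) with hθlt | hθeq | hθgt
    · -- use left band : find t ∈ (b' - εL, b') with g' t = η θ
      have hs1 : g' (b' - εL) < η θ := by
        have h1 : η (a', b') - min δR δL < η θ := by linarith
        have h2 : min δR δL ≤ δL := min_le_right _ _
        have h3 : g' (b' - εL) = η (a', b') - δL := by rw [hδLdef, hg'b]; ring
        linarith
      have hs2 : η θ < g' b' := by rw [hg'b]; exact hθlt
      obtain ⟨t, ht, hgt⟩ := intermediate_value_Ioo (by linarith : b' - εL ≤ b')
        hg'cont.continuousOn ⟨hs1, hs2⟩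
      have htmem : (a', t) ∈ Θ := by
        apply hmem2
        rw [abs_lt]
        have hmin : εL ≤ ε2 / 2 := min_le_left _ _
        exact ⟨by linarith [ht.1], by linarith [ht.2]⟩
      -- merit comparisons
      have hm1 : m (a', t) < m (a', b') := by
        have : t / z a' < b' / z a' := by
          rw [div_lt_div_iff₀ hza' hza']
          nlinarith [ht.2]
        simpa [hmdef] using this
      have hm2 : m (a, b) < m (a', t) := by
        have hεL2 : εL ≤ (b' - (b / z a) * z a') / 2 := min_le_right _ _
        have : (b / z a) * z a' < t := by linarith [ht.1]
        have : b / z a < t / z a' := (lt_div_iff₀ hza').mpr this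
        simpa [hmdef] using this
      have hx1 : x (a', t) ≤ x (a', b') := mono _ htmem _ hhi hm1
      have hx2 : x (a, b) ≤ x (a', t) := mono _ hlo _ htmem hm2
      have hxθ : x θ = x (a', t) := hEq θ hθ _ htmem hgt.symm
      linarith
    · exact hEq θ hθ _ hhi hθeq
    · -- use right band : find t ∈ (b, b + εR) with g t = η θ
      have hs1 : g b < η θ := by rw [hgb]; exact hθgt
      have hs2 : η θ < g (b + εR) := by
        have : η θ < η (a', b') + δR := by
          have := habs.2
          have hmin := min_le_left δR δL
          linarith
        have : η θ < g b + δR := by rwa [hgb]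
        linarith [this]
      obtain ⟨t, ht, hgt⟩ := intermediate_value_Ioo (by linarith : b ≤ b + εR)
        hgcont.continuousOn ⟨hs1, hs2⟩
      have htmem : (a, t) ∈ Θ := by
        apply hmem1
        rw [abs_lt]
        have hmin : εR ≤ ε1 / 2 := min_le_left _ _
        exact ⟨by linarith [ht.1], by linarith [ht.2]⟩
      have hm1 : m (a, b) < m (a, t) := by
        have : b / z a < t / z a := by
          rw [div_lt_div_iff₀ hza hza]
          nlinarith [ht.1]
        simpa [hmdef] using this
      have hm2 : m (a, t) < m (a', b') := by
        have hεR2 : εR ≤ ((b' / z a') * z a - b) / 2 := min_le_right _ _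
        have : t < (b' / z a') * z a := by linarith [ht.2]
        have : t / z a < b' / z a' := (div_lt_iff₀ hza).mpr this
        simpa [hmdef] using this
      have hx1 : x (a, b) ≤ x (a, t) := mono _ hlo _ htmem hm1
      have hx2 : x (a, t) ≤ x (a', b') := mono _ htmem _ hhi hm2
      have hxθ : x θ = x (a, t) := hEq θ hθ _ htmem hgt.symm
      linarith
  -- local constancy of x on Θ
  have locconst : ∀ θ0 ∈ Θ, ∃ δ > 0, ∀ θ ∈ Θ, |η θ - η θ0| < δ → x θ = x θ0 := by
    intro θ0 hθ0
    obtain ⟨θ', hθ', hηeq, hmne⟩ := hcase θ0 hθ0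
    rcases lt_or_gt_of_ne hmne with h | h
    · exact side θ' hθ' θ0 hθ0 hηeq h
    · obtain ⟨δ, hδ, hd⟩ := side θ0 hθ0 θ' hθ' hηeq.symm h
      refine ⟨δ, hδ, fun θ hθ hcl => ?_⟩
      exact (hd θ hθ (by rw [hηeq]; exact hcl)).trans (hEq θ' hθ' θ0 hθ0 hηeq)
  -- connectedness argument : x would be globally constant, contradiction
  obtain ⟨θ1, hθ1, θ2, hθ2, hx12⟩ := hnc
  choose δf hδf hloc using locconst
  set U : Set (ℝ × ℝ) :=
    ⋃ (θ : ℝ × ℝ) (h : θ ∈ Θ) (_ : x θ = x θ1), η ⁻¹' Metric.ball (η θ) (δf θ h) with hUdef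
  set V : Set (ℝ × ℝ) :=
    ⋃ (θ : ℝ × ℝ) (h : θ ∈ Θ) (_ : x θ ≠ x θ1), η ⁻¹' Metric.ball (η θ) (δf θ h) with hVdef
  have hUopen : IsOpen U := by
    apply isOpen_iUnion; intro θ; apply isOpen_iUnion; intro h; apply isOpen_iUnion; intro _
    exact Metric.isOpen_ball.preimage hηC2.continuous
  have hVopen : IsOpen V := by
    apply isOpen_iUnion; intro θ; apply isOpen_iUnion; intro h; apply isOpen_iUnion; intro _
    exact Metric.isOpen_ball.preimage hηC2.continuous
  have hself : ∀ θ (h : θ ∈ Θ), θ ∈ η ⁻¹' Metric.ball (η θ) (δf θ h) := by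
    intro θ h
    simp [Metric.mem_ball, hδf θ h]
  have hcover : Θ ⊆ U ∪ V := by
    intro θ hθ
    by_cases hx : x θ = x θ1
    · exact Or.inl (mem_iUnion.2 ⟨θ, mem_iUnion.2 ⟨hθ, mem_iUnion.2 ⟨hx, hself θ hθ⟩⟩⟩)
    · exact Or.inr (mem_iUnion.2 ⟨θ, mem_iUnion.2 ⟨hθ, mem_iUnion.2 ⟨hx, hself θ hθ⟩⟩⟩)
  have hU1 : (Θ ∩ U).Nonempty :=
    ⟨θ1, hθ1, mem_iUnion.2 ⟨θ1, mem_iUnion.2 ⟨hθ1, mem_iUnion.2 ⟨rfl, hself θ1 hθ1⟩⟩⟩⟩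
  have hV2 : (Θ ∩ V).Nonempty :=
    ⟨θ2, hθ2, mem_iUnion.2 ⟨θ2, mem_iUnion.2 ⟨hθ2, mem_iUnion.2 ⟨Ne.symm hx12, hself θ2 hθ2⟩⟩⟩⟩
  obtain ⟨w, hwΘ, hwU, hwV⟩ := hΘconv.isPreconnected U V hUopen hVopen hcover hU1 hV2
  obtain ⟨θa, hha⟩ := mem_iUnion.1 hwU
  obtain ⟨hθaΘ, hha⟩ := mem_iUnion.1 hha
  obtain ⟨hθax, hwa⟩ := mem_iUnion.1 hha
  obtain ⟨θb, hhb⟩ := mem_iUnion.1 hwV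
  obtain ⟨hθbΘ, hhb⟩ := mem_iUnion.1 hhb
  obtain ⟨hθbx, hwb⟩ := mem_iUnion.1 hhb
  have hwa' : x w = x θa := by
    apply hloc θa hθaΘ w hwΘ
    simpa [Real.dist_eq] using hwa
  have hwb' : x w = x θb := by
    apply hloc θb hθbΘ w hwΘ
    simpa [Real.dist_eq] using hwb
  exact hθbx (hwb'.symm.trans (hwa'.trans hθax))
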